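/- Let p be an odd prime, k a positive integer, a ∈ (ℤ/p^kℤ)ˣ with a ≡ 1 (mod p), and b ∈ ℤ/p^kℤ with v(b) ≥ v(a−1); let σ := λ(a,b). Then the order of σ as a permutation is a power of p, and for every integer s ≥ 0, the number of x ∈ ℤ/p^kℤ with σ^{p^s}(x) = x equals p^{min(k, v(a−1)+s)}. -/

import Mathlib

/-- The affine permutation `λ(a,b) : x ↦ a·x + b` of `ZMod m`, for a unit `a` and an
element `b`. -/
def affinePerm (m : ℕ) (a : (ZMod m)ˣ) (b : ZMod m) : Equiv.Perm (ZMod m) where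
  toFun x := (a : ZMod m) * x + b
  invFun x := ((a⁻¹ : (ZMod m)ˣ) : ZMod m) * (x - b)
  left_inv x := by
    show (a⁻¹ : (ZMod m)ˣ) * ((a : ZMod m) * x + b - b) = x
    rw [add_sub_cancel_right, ← mul_assoc, Units.inv_mul, one_mul]
  right_inv x := by
    show (a : ZMod m) * ((a⁻¹ : (ZMod m)ˣ) * (x - b)) + b = x
    rw [← mul_assoc, Units.mul_inv, one_mul, sub_add_cancel]

/-- `padicV p k c` is `v(c) = max{ j ∈ {0,…,k} : c ∈ p^j·(ℤ/p^kℤ) }`: it is `k` for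
`c = 0`, and the `p`-adic valuation of the canonical representative `c.val` otherwise. -/
def padicV (p k : ℕ) (c : ZMod (p ^ k)) : ℕ :=
  if c = 0 then k else (c.val).factorization p

lemma affinePerm_pow_apply (m : ℕ) (a : (ZMod m)ˣ) (b : ZMod m) (n : ℕ) (x : ZMod m) :
    ((affinePerm m a b) ^ n) x
      = (a : ZMod m) ^ n * x + (∑ i ∈ Finset.range n, (a : ZMod m) ^ i) * b := by
  induction n with
  | zero => simp [pow_zero]
  | succ n ih =>
    rw [pow_succ', Equiv.Perm.mul_apply, ih]
    show (a : ZMod m) * _ + b = _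
    rw [geom_sum_succ]
    ring

lemma padicV_lt_of_ne_zero {p k : ℕ} (hp : p.Prime) {c : ZMod (p ^ k)} (hc : c ≠ 0) :
    padicV p k c < k := by
  haveI : NeZero (p ^ k) := ⟨(pow_pos hp.pos k).ne'⟩
  rw [padicV, if_neg hc]
  by_contra h
  push_neg at h
  have hval : c.val ≠ 0 := fun h0 => hc ((ZMod.val_eq_zero c).mp h0)
  have hdvd : p ^ k ∣ c.val := (Nat.Prime.pow_dvd_iff_le_factorization hp hval).mpr h
  exact absurd (Nat.le_of_dvd (Nat.pos_of_ne_zero hval) hdvd) (not_le.mpr (ZMod.val_lt c))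

lemma padicV_natCast {p k : ℕ} (hp : p.Prime) {N : ℕ} (hN : N ≠ 0) :
    padicV p k (N : ZMod (p ^ k)) = min k (N.factorization p) := by
  haveI : NeZero (p ^ k) := ⟨(pow_pos hp.pos k).ne'⟩
  by_cases h0 : (N : ZMod (p ^ k)) = 0
  · rw [padicV, if_pos h0]
    have hdvd : p ^ k ∣ N := (ZMod.natCast_eq_zero_iff N (p ^ k)).mp h0
    have hle := (Nat.Prime.pow_dvd_iff_le_factorization hp hN).mp hdvd
    omega
  · rw [padicV, if_neg h0]
    have hvaldef : (N : ZMod (p ^ k)).val = N % p ^ k := ZMod.val_natCast (p ^ k) N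
    set r := N % p ^ k with hrdef
    have hrN : p ^ k * (N / p ^ k) + r = N := Nat.div_add_mod N (p ^ k)
    have hr0 : r ≠ 0 := by
      intro h
      exact h0 ((ZMod.natCast_eq_zero_iff N (p ^ k)).mpr
        (Nat.dvd_of_mod_eq_zero h))
    set α := r.factorization p with hαdef
    have hαk : α < k := by
      by_contra hcon
      push_neg at hcon
      have hdvd : p ^ k ∣ r := (Nat.Prime.pow_dvd_iff_le_factorization hp hr0).mpr hcon
      have : p ^ k ≤ r := Nat.le_of_dvd (Nat.pos_of_ne_zero hr0) hdvd
      have : r < p ^ k := Nat.mod_lt _ (pow_pos hp.pos k)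
      omega
    have h1 : p ^ α ∣ N := by
      rw [← hrN]
      exact Nat.dvd_add (Dvd.dvd.mul_right ((pow_dvd_pow p hαk.le).trans (dvd_refl _)) _)
        (Nat.ordProj_dvd r p)
    have h2 : ¬ p ^ (α + 1) ∣ N := by
      intro h
      have hd1 : p ^ (α + 1) ∣ p ^ k * (N / p ^ k) :=
        Dvd.dvd.mul_right (pow_dvd_pow p hαk) _
      have hdr : p ^ (α + 1) ∣ r := by
        have : r = N - p ^ k * (N / p ^ k) := by omega
        rw [this]
        exact Nat.dvd_sub h hd1
      have := (Nat.Prime.pow_dvd_iff_le_factorization hp hr0).mp hdr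
      omega
    have lo : α ≤ N.factorization p :=
      (Nat.Prime.pow_dvd_iff_le_factorization hp hN).mp h1
    have hi : ¬ (α + 1 ≤ N.factorization p) := fun h =>
      h2 ((Nat.Prime.pow_dvd_iff_le_factorization hp hN).mpr h)
    rw [hvaldef]
    omega

lemma exists_padicV_unit {p k : ℕ} (hp : p.Prime) (c : ZMod (p ^ k)) :
    ∃ u : (ZMod (p ^ k))ˣ, c = (p : ZMod (p ^ k)) ^ padicV p k c * u := by
  haveI : NeZero (p ^ k) := ⟨(pow_pos hp.pos k).ne'⟩
  by_cases h0 : c = 0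
  · refine ⟨1, ?_⟩
    have hpk : (p : ZMod (p ^ k)) ^ k = 0 := by
      rw [← Nat.cast_pow, ZMod.natCast_self]
    rw [h0, padicV, if_pos rfl, hpk, zero_mul]
  · have hval : c.val ≠ 0 := fun h => h0 ((ZMod.val_eq_zero c).mp h)
    have hm : ¬ p ∣ c.val / p ^ (c.val.factorization p) := Nat.not_dvd_ordCompl hp hval
    have hcop : Nat.Coprime (c.val / p ^ (c.val.factorization p)) (p ^ k) :=
      (((Nat.Prime.coprime_iff_not_dvd hp).mpr hm).symm).pow_right k
    refine ⟨ZMod.unitOfCoprime _ hcop, ?_⟩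
    rw [padicV, if_neg h0, ZMod.coe_unitOfCoprime]
    conv_lhs => rw [← ZMod.natCast_rightInverse c]
    rw [← Nat.cast_pow, ← Nat.cast_mul, Nat.ordProj_mul_ordCompl_eq_self]

lemma pow_padicV_dvd {p k : ℕ} (hp : p.Prime) (c : ZMod (p ^ k)) :
    (p : ZMod (p ^ k)) ^ padicV p k c ∣ c := by
  obtain ⟨u, hu⟩ := exists_padicV_unit hp c
  exact ⟨u, hu⟩

lemma card_pow_mul_eq_zero {p k : ℕ} (hp : p.Prime) {j : ℕ} (hj : j ≤ k) :
    Nat.card {z : ZMod (p ^ k) // (p : ZMod (p ^ k)) ^ j * z = 0} = p ^ j := by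
  haveI : NeZero (p ^ k) := ⟨(pow_pos hp.pos k).ne'⟩
  haveI : NeZero (p ^ (k - j)) := ⟨(pow_pos hp.pos _).ne'⟩
  set f : ZMod (p ^ k) →+ ZMod (p ^ (k - j)) :=
    (ZMod.castHom (pow_dvd_pow p (Nat.sub_le k j)) (ZMod (p ^ (k - j)))).toAddMonoidHom
    with hfdef
  have hfn : ∀ n : ℕ, f (n : ZMod (p ^ k)) = (n : ZMod (p ^ (k - j))) := fun n => by
    show (ZMod.castHom (pow_dvd_pow p (Nat.sub_le k j)) (ZMod (p ^ (k - j))))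
      ((n : ℕ) : ZMod (p ^ k)) = (n : ZMod (p ^ (k - j)))
    exact map_natCast _ n
  have hsurj : Function.Surjective f := by
    intro y
    obtain ⟨n, rfl⟩ := ZMod.natCast_rightInverse.surjective y
    exact ⟨(n : ZMod (p ^ k)), hfn n⟩
  have hker : ∀ z : ZMod (p ^ k), ((p : ZMod (p ^ k)) ^ j * z = 0 ↔ z ∈ f.ker) := by
    intro z
    rw [AddMonoidHom.mem_ker]
    have hzval : ((z.val : ℕ) : ZMod (p ^ k)) = z := ZMod.natCast_rightInverse z
    have l1 : (p : ZMod (p ^ k)) ^ j * z = ((p ^ j * z.val : ℕ) : ZMod (p ^ k)) := by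
      conv_lhs => rw [← hzval]
      push_cast
      ring
    have l2 : f z = ((z.val : ℕ) : ZMod (p ^ (k - j))) := by
      conv_lhs => rw [← hzval]
      rw [hfn]
    rw [l1, l2, ZMod.natCast_eq_zero_iff, ZMod.natCast_eq_zero_iff]
    constructor
    · intro h
      have h' : p ^ j * p ^ (k - j) ∣ p ^ j * z.val := by
        rwa [← pow_add, Nat.add_sub_cancel' hj]
      exact (Nat.mul_dvd_mul_iff_left (pow_pos hp.pos j)).mp h'
    · intro h
      have h' : p ^ j * p ^ (k - j) ∣ p ^ j * z.val := mul_dvd_mul_left _ h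
      rwa [← pow_add, Nat.add_sub_cancel' hj] at h'
  rw [Nat.card_congr (Equiv.subtypeEquivRight hker)]
  have h2 : Nat.card (ZMod (p ^ k)) = Nat.card (ZMod (p ^ k) ⧸ f.ker) * Nat.card f.ker :=
    AddSubgroup.card_eq_card_quotient_mul_card_addSubgroup f.ker
  have h3 : Nat.card (ZMod (p ^ k) ⧸ f.ker) = p ^ (k - j) := by
    rw [Nat.card_congr (QuotientAddGroup.quotientKerEquivOfSurjective f hsurj).toEquiv,
      Nat.card_zmod]
  rw [Nat.card_zmod, h3] at h2
  have h4 : p ^ (k - j) * Nat.card f.ker = p ^ (k - j) * p ^ j := by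
    rw [← h2, ← pow_add]
    congr 1
    omega
  exact Nat.eq_of_mul_eq_mul_left (pow_pos hp.pos _) h4

lemma card_solutions {p k : ℕ} (hp : p.Prime) {j : ℕ} (hj : j ≤ k)
    (u : (ZMod (p ^ k))ˣ) (d : ZMod (p ^ k)) (hd : (p : ZMod (p ^ k)) ^ j ∣ d) :
    Nat.card {x : ZMod (p ^ k) // ((p : ZMod (p ^ k)) ^ j * u) * x = d} = p ^ j := by
  obtain ⟨e, rfl⟩ := hd
  rw [← card_pow_mul_eq_zero hp hj]
  apply Nat.card_congr
  have hu1 : (u : ZMod (p ^ k)) * ((u⁻¹ : (ZMod (p ^ k))ˣ) : ZMod (p ^ k)) = 1 :=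
    Units.mul_inv u
  have hu2 : ((u⁻¹ : (ZMod (p ^ k))ˣ) : ZMod (p ^ k)) * (u : ZMod (p ^ k)) = 1 :=
    Units.inv_mul u
  refine ⟨fun x => ⟨(u : ZMod (p ^ k)) * x.1 - e, ?_⟩,
    fun z => ⟨((u⁻¹ : (ZMod (p ^ k))ˣ) : ZMod (p ^ k)) * (z.1 + e), ?_⟩, ?_, ?_⟩
  · linear_combination x.2
  · linear_combination ((u : ZMod (p ^ k)) * ((u⁻¹ : (ZMod (p ^ k))ˣ) : ZMod (p ^ k))) * z.2
      + ((p : ZMod (p ^ k)) ^ j * e) * hu1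
  · intro x
    apply Subtype.ext
    show ((u⁻¹ : (ZMod (p ^ k))ˣ) : ZMod (p ^ k)) * ((u : ZMod (p ^ k)) * x.1 - e + e) = x.1
    rw [sub_add_cancel, ← mul_assoc, hu2, one_mul]
  · intro z
    apply Subtype.ext
    show (u : ZMod (p ^ k)) * (((u⁻¹ : (ZMod (p ^ k))ˣ) : ZMod (p ^ k)) * (z.1 + e)) - e = z.1
    rw [← mul_assoc, hu1, one_mul, add_sub_cancel_right]

/-- For `p` an odd prime, `a ≡ 1 (mod p)` a unit of `ℤ/p^kℤ` and `b` with
`v(b) ≥ v(a−1)`, the order of `σ = λ(a,b)` is a power of `p`, and for each `s ≥ 0` the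
number of fixed points of `σ^{p^s}` is `p^{min(k, v(a−1)+s)}`. -/
theorem stmt9 (p : ℕ) (hp : p.Prime) (hodd : Odd p) (k : ℕ) (hk : 0 < k)
    (a : (ZMod (p ^ k))ˣ)
    (ha : ZMod.castHom (dvd_pow_self p hk.ne') (ZMod p) (a : ZMod (p ^ k)) = 1)
    (b : ZMod (p ^ k))
    (hb : padicV p k ((a : ZMod (p ^ k)) - 1) ≤ padicV p k b) :
    (∃ n : ℕ, orderOf (affinePerm (p ^ k) a b) = p ^ n) ∧
    ∀ s : ℕ,
      Nat.card {x : ZMod (p ^ k) // ((affinePerm (p ^ k) a b) ^ (p ^ s)) x = x}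
        = p ^ (min k (padicV p k ((a : ZMod (p ^ k)) - 1) + s)) := by
  haveI : Fact p.Prime := ⟨hp⟩
  haveI : NeZero (p ^ k) := ⟨(pow_pos hp.pos k).ne'⟩
  haveI : Fact (1 < p ^ k) := ⟨Nat.one_lt_pow hk.ne' hp.one_lt⟩
  by_cases ha1 : (a : ZMod (p ^ k)) = 1
  · -- degenerate case a = 1, b = 0
    have htk : padicV p k ((a : ZMod (p ^ k)) - 1) = k := by
      rw [ha1, sub_self, padicV, if_pos rfl]
    have hb0 : b = 0 := by
      by_contra hb'
      rw [htk] at hb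
      exact absurd hb (not_le.mpr (padicV_lt_of_ne_zero hp hb'))
    have hσ : affinePerm (p ^ k) a b = 1 := by
      apply Equiv.ext
      intro x
      show (a : ZMod (p ^ k)) * x + b = x
      rw [ha1, hb0, one_mul, add_zero]
    refine ⟨⟨0, by rw [hσ, pow_zero, orderOf_one]⟩, fun s => ?_⟩
    rw [hσ, one_pow, htk]
    have hmin : min k (k + s) = k := by omega
    rw [hmin]
    have he : {x : ZMod (p ^ k) // (1 : Equiv.Perm (ZMod (p ^ k))) x = x} ≃ ZMod (p ^ k) :=
      Equiv.subtypeUnivEquiv fun x => rfl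
    rw [Nat.card_congr he, Nat.card_zmod]
  · -- main case a ≠ 1
    set A := (a : ZMod (p ^ k)).val with hAdef
    have hA0 : ((A : ℕ) : ZMod (p ^ k)) = (a : ZMod (p ^ k)) := ZMod.natCast_rightInverse _
    have hAne : (a : ZMod (p ^ k)) ≠ 0 := Units.ne_zero a
    have hA2 : 2 ≤ A := by
      rcases Nat.lt_or_ge A 2 with h | h
      · interval_cases A
        · exact absurd hA0.symm (by simpa using hAne)
        · exact absurd (by simpa using hA0.symm) ha1
      · exact h
    have hApk : A < p ^ k := ZMod.val_lt _
    have hA1Z : ((A - 1 : ℕ) : ZMod (p ^ k)) = (a : ZMod (p ^ k)) - 1 := by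
      push_cast [Nat.cast_sub (by omega : 1 ≤ A)]
      rw [hA0]
    have hAp : ((A : ℕ) : ZMod p) = 1 := by
      rw [hAdef, ZMod.natCast_val]
      rw [← ZMod.castHom_apply (h := dvd_pow_self p hk.ne')]
      exact ha
    have hpA1 : p ∣ A - 1 := by
      have h1 : ((A - 1 : ℕ) : ZMod p) = 0 := by
        push_cast [Nat.cast_sub (by omega : 1 ≤ A)]
        rw [hAp]
        ring
      exact (ZMod.natCast_eq_zero_iff _ p).mp h1
    have hpA : ¬ p ∣ A := by
      intro h
      have hd := Nat.dvd_sub h hpA1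
      rw [Nat.sub_sub_self (by omega : 1 ≤ A)] at hd
      have := Nat.le_of_dvd one_pos hd
      have := hp.two_le
      omega
    have ht : padicV p k ((a : ZMod (p ^ k)) - 1) = (A - 1).factorization p := by
      have hne : (a : ZMod (p ^ k)) - 1 ≠ 0 := sub_ne_zero.mpr ha1
      have h1 := padicV_natCast (k := k) hp (show A - 1 ≠ 0 by omega)
      rw [hA1Z] at h1
      have h2 := padicV_lt_of_ne_zero hp hne
      omega
    set t := (A - 1).factorization p with htdef
    have hfact : ∀ s : ℕ, (A ^ p ^ s - 1).factorization p = t + s := by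
      intro s
      have hps : p ^ s ≠ 0 := (pow_pos hp.pos s).ne'
      have h := padicValNat.pow_sub_pow (p := p) hodd (show 1 < A by omega)
        (by simpa using hpA1) hpA hps
      rw [one_pow] at h
      rw [Nat.factorization_def _ hp, h, padicValNat.prime_pow, htdef,
        Nat.factorization_def _ hp]
    have hN0 : ∀ s : ℕ, A ^ p ^ s - 1 ≠ 0 := by
      intro s
      have h2 : A ≤ A ^ p ^ s := Nat.le_self_pow (pow_pos hp.pos s).ne' A
      omega
    have hSpos : ∀ s : ℕ, 0 < ∑ i ∈ Finset.range (p ^ s), A ^ i := by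
      intro s
      apply Finset.sum_pos (fun i _ => pow_pos (by omega) i)
      exact Finset.nonempty_range_iff.mpr (pow_pos hp.pos s).ne'
    have hprod : ∀ s : ℕ, (A - 1) * (∑ i ∈ Finset.range (p ^ s), A ^ i) = A ^ p ^ s - 1 := by
      intro s
      have hgeom := geom_sum_mul (A : ℤ) (p ^ s)
      have h1 : (1 : ℕ) ≤ A ^ p ^ s := by have := hN0 s; omega
      rw [← Nat.cast_inj (R := ℤ)]
      push_cast [Nat.cast_sub (by omega : 1 ≤ A), Nat.cast_sub h1]
      linear_combination hgeom
    have hSfact : ∀ s : ℕ, p ^ s ∣ ∑ i ∈ Finset.range (p ^ s), A ^ i := by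
      intro s
      have hS0 : (∑ i ∈ Finset.range (p ^ s), A ^ i) ≠ 0 := (hSpos s).ne'
      have hmul := Nat.factorization_mul (show A - 1 ≠ 0 by omega) hS0
      have heq : t + (∑ i ∈ Finset.range (p ^ s), A ^ i).factorization p = t + s := by
        have h1 : ((A - 1) * (∑ i ∈ Finset.range (p ^ s), A ^ i)).factorization p
            = t + (∑ i ∈ Finset.range (p ^ s), A ^ i).factorization p := by
          rw [hmul]
          simp [htdef]
        rw [← h1, hprod s, hfact s]
      have hfS : (∑ i ∈ Finset.range (p ^ s), A ^ i).factorization p = s := by omega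
      calc p ^ s = p ^ ((∑ i ∈ Finset.range (p ^ s), A ^ i).factorization p) := by rw [hfS]
        _ ∣ _ := Nat.ordProj_dvd _ p
    have hcast : ∀ s : ℕ, ((A ^ p ^ s - 1 : ℕ) : ZMod (p ^ k))
        = (a : ZMod (p ^ k)) ^ p ^ s - 1 := by
      intro s
      have h1 : (1 : ℕ) ≤ A ^ p ^ s := by have := hN0 s; omega
      push_cast [Nat.cast_sub h1]
      rw [hA0]
    have hScast : ∀ s : ℕ, ((∑ i ∈ Finset.range (p ^ s), A ^ i : ℕ) : ZMod (p ^ k))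
        = ∑ i ∈ Finset.range (p ^ s), (a : ZMod (p ^ k)) ^ i := by
      intro s
      push_cast
      rw [hA0]
    have horder : (affinePerm (p ^ k) a b) ^ (p ^ k) = 1 := by
      apply Equiv.ext
      intro x
      rw [affinePerm_pow_apply]
      have h1 : (a : ZMod (p ^ k)) ^ p ^ k - 1 = 0 := by
        rw [← hcast k, ZMod.natCast_eq_zero_iff]
        have hle : k ≤ (A ^ p ^ k - 1).factorization p := by
          rw [hfact k]; omega
        exact (Nat.Prime.pow_dvd_iff_le_factorization hp (hN0 k)).mpr hle
      have h2 : (∑ i ∈ Finset.range (p ^ k), (a : ZMod (p ^ k)) ^ i) = 0 := by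
        rw [← hScast k, ZMod.natCast_eq_zero_iff]
        exact hSfact k
      have h1' : (a : ZMod (p ^ k)) ^ p ^ k = 1 := by rwa [sub_eq_zero] at h1
      rw [h1', h2, one_mul, zero_mul, add_zero]
      rfl
    constructor
    · obtain ⟨n, _, hor⟩ := (Nat.dvd_prime_pow hp).mp (orderOf_dvd_of_pow_eq_one horder)
      exact ⟨n, hor⟩
    · intro s
      have hvc : padicV p k ((a : ZMod (p ^ k)) ^ p ^ s - 1) = min k (t + s) := by
        rw [← hcast s, padicV_natCast hp (hN0 s), hfact s]
      obtain ⟨u, hu⟩ := exists_padicV_unit hp ((a : ZMod (p ^ k)) ^ p ^ s - 1)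
      rw [hvc] at hu
      have hdvd : (p : ZMod (p ^ k)) ^ (min k (t + s))
          ∣ -((∑ i ∈ Finset.range (p ^ s), (a : ZMod (p ^ k)) ^ i) * b) := by
        rw [dvd_neg]
        have h1 : (p : ZMod (p ^ k)) ^ s ∣ ∑ i ∈ Finset.range (p ^ s), (a : ZMod (p ^ k)) ^ i := by
          rw [← hScast s]
          have hd := hSfact s
          have : ((p ^ s : ℕ) : ZMod (p ^ k)) ∣ ((∑ i ∈ Finset.range (p ^ s), A ^ i : ℕ)
              : ZMod (p ^ k)) := Nat.cast_dvd_cast hd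
          simpa using this
        have h2 : (p : ZMod (p ^ k)) ^ t ∣ b := by
          refine dvd_trans (pow_dvd_pow _ ?_) (pow_padicV_dvd hp b)
          rw [← ht]
          exact hb
        have h3 : (p : ZMod (p ^ k)) ^ (min k (t + s)) ∣ (p : ZMod (p ^ k)) ^ (s + t) :=
          pow_dvd_pow _ (by omega)
        exact h3.trans (by rw [pow_add]; exact mul_dvd_mul h1 h2)
      have hcount := card_solutions hp (min_le_left k (t + s)) u _ hdvd
      rw [ht, ← hcount]
      apply Nat.card_congr
      apply Equiv.subtypeEquivRight
      intro x
      rw [affinePerm_pow_apply]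
      constructor
      · intro h
        rw [← hu]
        linear_combination h
      · intro h
        rw [← hu] at h
        linear_combination h
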